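/- arXiv:cs/0102009 — 2 statements merged into one kernel-verified Lean document; each statement's English description precedes it below -/
import Mathlib

section
/- Let G=(A,B,E) be a bipartite graph and let Y1, Y2 be a legal pair of pendant blocks of G such that Y1 and Y2 are not the two singleton blocks formed by the endpoints of an isolated-edge connected component. Then there exists a binding edge for Y1 and Y2, i.e., a legal edge of G joining a noncut vertex of Y1 to a noncut vertex of Y2. -/
open SimpleGraph

namespace AugBic

noncomputable section

variable {V : Type*}

/-- Two vertices are biconnected: they are in the same connected component and remain so
after the removal of any single edge or any single vertex other than either of them. -/
def BiconnPair (G : SimpleGraph V) (u v : V) : Prop :=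
  G.Reachable u v ∧
  (∀ e ∈ G.edgeSet, (G.deleteEdges {e}).Reachable u v) ∧
  (∀ w : V, ∀ hu : u ≠ w, ∀ hv : v ≠ w,
    (G.induce {x | x ≠ w}).Reachable ⟨u, hu⟩ ⟨v, hv⟩)

/-- A set of vertices is biconnected if every pair of its vertices is biconnected. -/
def BiconnSet (G : SimpleGraph V) (S : Set V) : Prop :=
  ∀ u ∈ S, ∀ v ∈ S, BiconnPair G u v

/-- A block: (the induced subgraph on) a maximal biconnected set of vertices. -/
def IsBlock (G : SimpleGraph V) (S : Set V) : Prop :=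
  S.Nonempty ∧ BiconnSet G S ∧ ∀ T : Set V, S ⊆ T → BiconnSet G T → T = S

/-- A cut vertex: its removal increases the number of connected components. -/
def IsCutVertex (G : SimpleGraph V) (v : V) : Prop :=
  Nat.card G.ConnectedComponent <
    Nat.card ((G.induce {x | x ≠ v}).ConnectedComponent)

/-- A cut edge: its removal increases the number of connected components. -/
def IsCutEdge (G : SimpleGraph V) (e : Sym2 V) : Prop :=
  e ∈ G.edgeSet ∧
    Nat.card G.ConnectedComponent <
      Nat.card ((G.deleteEdges {e}).ConnectedComponent)

/-- A pendant block: a singular block consisting of a vertex of degree 1, or a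
nonsingular block containing exactly one cut vertex. -/
def IsPendantBlock (G : SimpleGraph V) (S : Set V) : Prop :=
  IsBlock G S ∧
    ((∃ v, S = {v} ∧ (G.neighborSet v).ncard = 1) ∨
     (1 < S.ncard ∧ ∃! v, v ∈ S ∧ IsCutVertex G v))

/-- Λ(G): the set of pendant blocks of `G`. -/
def pendantBlocks (G : SimpleGraph V) : Set (Set V) :=
  {S | IsPendantBlock G S}

/-- A block is of type `P` (for `P = A` or `P = B`) if all its noncut vertices lie in `P`. -/
def TypeOnly (G : SimpleGraph V) (P : Set V) (S : Set V) : Prop :=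
  ∀ v ∈ S, ¬IsCutVertex G v → v ∈ P

/-- A block is type AB if it has a noncut vertex in `A` and a noncut vertex in `B`. -/
def TypeAB (G : SimpleGraph V) (A B : Set V) (S : Set V) : Prop :=
  (∃ v ∈ S, ¬IsCutVertex G v ∧ v ∈ A) ∧ (∃ v ∈ S, ¬IsCutVertex G v ∧ v ∈ B)

/-- A legal pair: two distinct pendant blocks, not both of type A and not both of type B. -/
def LegalPair (G : SimpleGraph V) (A B : Set V) (S T : Set V) : Prop :=
  IsPendantBlock G S ∧ IsPendantBlock G T ∧ S ≠ T ∧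
  ¬(TypeOnly G A S ∧ TypeOnly G A T) ∧ ¬(TypeOnly G B S ∧ TypeOnly G B T)

/-- A legal edge: a vertex pair in `A × B` that is not an edge of `G`. -/
def LegalEdge (G : SimpleGraph V) (A B : Set V) (a b : V) : Prop :=
  a ∈ A ∧ b ∈ B ∧ ¬G.Adj a b

/-- A binding edge for a legal pair: a legal edge joining two noncut vertices,
one from each block of the pair. -/
def BindingEdge (G : SimpleGraph V) (A B : Set V) (S T : Set V) (a b : V) : Prop :=
  LegalEdge G A B a b ∧
  ((a ∈ S ∧ ¬IsCutVertex G a ∧ b ∈ T ∧ ¬IsCutVertex G b) ∨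
   (a ∈ T ∧ ¬IsCutVertex G a ∧ b ∈ S ∧ ¬IsCutVertex G b))

/-- A legal matching of a set `Λ'` of pendant blocks: a set of legal pairs between elements
of `Λ'` such that each element of `Λ'` belongs to at most one pair. -/
def IsLegalMatching (G : SimpleGraph V) (A B : Set V) (Λ' : Set (Set V))
    (N : Set (Set V × Set V)) : Prop :=
  (∀ q ∈ N, q.1 ∈ Λ' ∧ q.2 ∈ Λ' ∧ LegalPair G A B q.1 q.2) ∧
  (∀ q ∈ N, ∀ q' ∈ N, q ≠ q' →
    ({q.1, q.2} ∩ {q'.1, q'.2} : Set (Set V)) = ∅)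

/-- M(Λ'): the maximum cardinality of a legal matching of `Λ'`. -/
def maxMatching (G : SimpleGraph V) (A B : Set V) (Λ' : Set (Set V)) : ℕ :=
  sSup {k | ∃ N, IsLegalMatching G A B Λ' N ∧ N.ncard = k}

/-- R(Λ') = |Λ'| − 2·M(Λ'). -/
def Rnum (G : SimpleGraph V) (A B : Set V) (Λ' : Set (Set V)) : ℕ :=
  Λ'.ncard - 2 * maxMatching G A B Λ'

/-- A graph is componentwise biconnected if every connected component is a block. -/
def ComponentwiseBiconnected (G : SimpleGraph V) : Prop :=
  ∀ c : G.ConnectedComponent, IsBlock G c.supp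

/-- D(G,u): the number of connected components of X − {u}, where X is the
connected component of G containing u. -/
def Dnum (G : SimpleGraph V) (u : V) : ℕ :=
  Nat.card ((G.induce {v | G.Reachable u v ∧ v ≠ u}).ConnectedComponent)

/-- C(G): the number of connected components of G that are not blocks. -/
def Cnum (G : SimpleGraph V) : ℕ :=
  Nat.card {c : G.ConnectedComponent // ¬IsBlock G c.supp}

/-- η(G) = max{ max_u D(G,u) + C(G) − 2, M(Λ(G)) + R(Λ(G)) }. -/
def eta (G : SimpleGraph V) (A B : Set V) : ℕ :=
  max ((⨆ u : V, Dnum G u) + Cnum G - 2)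
      (maxMatching G A B (pendantBlocks G) + Rnum G A B (pendantBlocks G))

/-- A biconnector: a set of legal edges whose addition makes `G` componentwise biconnected. -/
def IsBiconnector (G : SimpleGraph V) (A B : Set V) (L : Set (Sym2 V)) : Prop :=
  (∀ e ∈ L, ∃ a b : V, e = s(a, b) ∧ LegalEdge G A B a b) ∧
  ComponentwiseBiconnected (G ⊔ SimpleGraph.fromEdgeSet L)

/-- B(G): the minimum number of edges of a biconnector of `G`. -/
def Bnum (G : SimpleGraph V) (A B : Set V) : ℕ :=
  sInf {k | ∃ L, IsBiconnector G A B L ∧ L.ncard = k}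

/-- A connected component is an isolated edge. -/
def IsIsolatedEdgeComp (G : SimpleGraph V) (c : G.ConnectedComponent) : Prop :=
  ∃ u v : V, G.Adj u v ∧ c.supp = {u, v}

/-- C1(G): the number of components that are neither isolated edges nor blocks. -/
def C1num (G : SimpleGraph V) : ℕ :=
  Nat.card {c : G.ConnectedComponent // ¬IsIsolatedEdgeComp G c ∧ ¬IsBlock G c.supp}

/-- C2(G): the number of isolated-edge components. -/
def C2num (G : SimpleGraph V) : ℕ :=
  Nat.card {c : G.ConnectedComponent // IsIsolatedEdgeComp G c}

/-- C3(G): the number of components that are nonsingular blocks. -/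
def C3num (G : SimpleGraph V) : ℕ :=
  Nat.card {c : G.ConnectedComponent // IsBlock G c.supp ∧ 1 < c.supp.ncard}

/-- A cut vertex `u` is critical if D(G,u) − 1 = M(Λ(G)) + R(Λ(G)). -/
def Critical (G : SimpleGraph V) (A B : Set V) (u : V) : Prop :=
  IsCutVertex G u ∧
    Dnum G u - 1 = maxMatching G A B (pendantBlocks G) + Rnum G A B (pendantBlocks G)

/-- A cut vertex `u` is massive if D(G,u) − 1 > M(Λ(G)) + R(Λ(G)). -/
def Massive (G : SimpleGraph V) (A B : Set V) (u : V) : Prop :=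
  IsCutVertex G u ∧
    maxMatching G A B (pendantBlocks G) + Rnum G A B (pendantBlocks G) < Dnum G u - 1

/-- Vertices of the block tree: blocks (b-vertices), cut vertices and cut edges (c-vertices). -/
inductive BTV (V : Type*) where
  | blk : Set V → BTV V
  | cv : V → BTV V
  | ce : Sym2 V → BTV V

/-- Valid vertices of the block tree of `G`: nonsingular blocks and singular pendant blocks
(b-vertices), together with cut vertices and cut edges (c-vertices). -/
def IsBTVert (G : SimpleGraph V) : BTV V → Prop
  | .blk S => IsBlock G S ∧ (1 < S.ncard ∨ ∃ v, S = {v} ∧ (G.neighborSet v).ncard = 1)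
  | .cv v => IsCutVertex G v
  | .ce e => IsCutEdge G e

/-- Adjacency of the block tree: a nonsingular block is joined to each cut vertex in it,
a cut vertex to each cut edge incident to it, and a cut edge to each singular (pendant)
block containing one of its endpoints. -/
def btAdj (G : SimpleGraph V) : BTV V → BTV V → Prop
  | .blk _, .blk _ => False
  | .blk S, .cv c => 1 < S.ncard ∧ c ∈ S
  | .blk S, .ce e => ∃ v, S = {v} ∧ v ∈ e
  | .cv c, .blk S => 1 < S.ncard ∧ c ∈ S
  | .cv _, .cv _ => False
  | .cv c, .ce e => c ∈ e
  | .ce e, .blk S => ∃ v, S = {v} ∧ v ∈ e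
  | .ce e, .cv c => c ∈ e
  | .ce _, .ce _ => False

/-- The vertex type of the block tree Ψ(G). -/
abbrev BTVert (G : SimpleGraph V) := {x : BTV V // IsBTVert G x}

/-- The block tree Ψ(G). -/
def blockTree (G : SimpleGraph V) : SimpleGraph (BTVert G) where
  Adj x y := btAdj G x.1 y.1
  symm := by
    constructor
    rintro ⟨x, hx⟩ ⟨y, hy⟩ h
    cases x <;> cases y <;> simp_all [btAdj]
  loopless := by
    constructor
    rintro ⟨x, hx⟩ h
    cases x <;> simp_all [btAdj]

/-- Degree of a vertex of the block tree. -/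
def btDeg (G : SimpleGraph V) (x : BTVert G) : ℕ :=
  Nat.card ((blockTree G).neighborSet x)

/-- A path is branchless if all its internal vertices have degree two. -/
def Branchless {W : Type*} (T : SimpleGraph W) {x y : W} (p : T.Walk x y) : Prop :=
  p.IsPath ∧ ∀ z ∈ p.support, z ≠ x → z ≠ y → Nat.card (T.neighborSet z) = 2

/-- A leaf clings to a vertex `v` if there is a branchless path between it and `v`. -/
def Clings {W : Type*} (T : SimpleGraph W) (l v : W) : Prop :=
  ∃ p : T.Walk l v, Branchless T p



private lemma card_lt_of_surj_not_inj {α β : Type*} [Finite α] (f : α → β)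
    (hs : Function.Surjective f) (hi : ¬Function.Injective f) :
    Nat.card β < Nat.card α := by
  have hle := Nat.card_le_card_of_surjective f hs
  rcases hle.lt_or_eq with h | h
  · exact h
  · exact absurd ((Nat.bijective_iff_surjective_and_card f).mpr ⟨hs, h.symm⟩).injective hi

private def ihom (G : SimpleGraph V) (s : Set V) : G.induce s →g G :=
  ⟨Subtype.val, fun h => h⟩

private lemma reach_induce_of_unique_nbr (G : SimpleGraph V) (a u₀ : V)
    (h : ∀ z, G.Adj a z → z = u₀) :
    ∀ (n : ℕ) {x y : V} (p : G.Walk x y), p.length ≤ n → ∀ (hx : x ≠ a) (hy : y ≠ a),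
      (G.induce {w | w ≠ a}).Reachable ⟨x, hx⟩ ⟨y, hy⟩ := by
  intro n
  induction n with
  | zero =>
    intro x y p hp hx hy
    have := SimpleGraph.Walk.eq_of_length_eq_zero (Nat.le_zero.mp hp)
    subst this
    exact Reachable.refl _
  | succ n ih =>
    intro x y p hp hx hy
    cases p with
    | nil => exact Reachable.refl _
    | cons hadj q =>
      rename_i z
      by_cases hz : z = a
      · subst hz
        cases q with
        | nil => exact absurd rfl hy
        | cons hadj2 r =>
          rename_i z2
          have hz2 : z2 = u₀ := h _ hadj2
          have hx0 : x = u₀ := h _ hadj.symm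
          subst hz2; subst hx0
          refine ih r ?_ hx hy
          simp only [SimpleGraph.Walk.length_cons] at hp
          omega
      · have step : (G.induce {w | w ≠ a}).Adj ⟨x, hx⟩ ⟨z, hz⟩ := hadj
        refine step.reachable.trans (ih q ?_ hz hy)
        simp only [SimpleGraph.Walk.length_cons] at hp
        omega

private lemma noncut_reach [Finite V] {G : SimpleGraph V} {a : V} (h : ¬IsCutVertex G a)
    {u v : V} (hu : u ≠ a) (hv : v ≠ a) (hr : G.Reachable u v) :
    (G.induce {x | x ≠ a}).Reachable ⟨u, hu⟩ ⟨v, hv⟩ := by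
  by_cases hnb : ∃ z, G.Adj a z
  · by_contra hnr
    apply h
    refine card_lt_of_surj_not_inj (ConnectedComponent.map (ihom G {x | x ≠ a})) ?_ ?_
    · intro C
      induction C using ConnectedComponent.ind with
      | _ x =>
        by_cases hx : x = a
        · obtain ⟨z, hz⟩ := hnb
          refine ⟨(G.induce {x | x ≠ a}).connectedComponentMk ⟨z, hz.ne'⟩, ?_⟩
          subst hx
          exact ConnectedComponent.sound hz.reachable.symm
        · exact ⟨(G.induce {x | x ≠ a}).connectedComponentMk ⟨x, hx⟩, rfl⟩
    · intro hinj
      apply hnr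
      have heq : (ConnectedComponent.map (ihom G {x | x ≠ a}))
            ((G.induce {x | x ≠ a}).connectedComponentMk ⟨u, hu⟩)
          = (ConnectedComponent.map (ihom G {x | x ≠ a}))
            ((G.induce {x | x ≠ a}).connectedComponentMk ⟨v, hv⟩) :=
        ConnectedComponent.sound hr
      exact ConnectedComponent.exact (hinj heq)
  · push_neg at hnb
    obtain ⟨p⟩ := hr
    exact reach_induce_of_unique_nbr G a u (fun z hz => absurd hz (hnb z)) p.length p
      le_rfl hu hv

private lemma deg1_noncut [Finite V] {G : SimpleGraph V} {a : V}
    (h : (G.neighborSet a).ncard = 1) : ¬IsCutVertex G a := by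
  obtain ⟨u₀, hu₀⟩ := Set.ncard_eq_one.mp h
  have hnb : ∀ z, G.Adj a z → z = u₀ := fun z hz => by
    have hmem : z ∈ G.neighborSet a := hz
    rw [hu₀] at hmem; exact hmem
  rw [IsCutVertex, not_lt]
  refine Nat.card_le_card_of_injective (ConnectedComponent.map (ihom G {x | x ≠ a})) ?_
  intro C C'
  induction C using ConnectedComponent.ind with
  | _ x =>
  induction C' using ConnectedComponent.ind with
  | _ y =>
  intro heq
  obtain ⟨p⟩ : G.Reachable x.val y.val := ConnectedComponent.exact heq
  exact ConnectedComponent.sound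
    (by simpa using reach_induce_of_unique_nbr G a u₀ hnb p.length p le_rfl x.2 y.2)

private lemma reach_del_transfer {G : SimpleGraph V} {a b : V}
    (hre : (G.deleteEdges {s(a, b)}).Reachable a b) :
    ∀ {x y : V}, G.Reachable x y → (G.deleteEdges {s(a, b)}).Reachable x y := by
  rintro x y ⟨p⟩
  induction p with
  | nil => exact Reachable.refl _
  | cons hadj q ih =>
    refine Reachable.trans ?_ ih
    rename_i x' z' _
    by_cases he : s(x', z') = s(a, b)
    · rcases Sym2.eq_iff.mp he with ⟨rfl, rfl⟩ | ⟨rfl, rfl⟩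
      · exact hre
      · exact hre.symm
    · exact (deleteEdges_adj.mpr ⟨hadj, by simp [he]⟩).reachable

private lemma not_cutedge_reach [Finite V] {G : SimpleGraph V} {a b : V} (hadj : G.Adj a b)
    (h : ¬IsCutEdge G s(a, b)) : (G.deleteEdges {s(a, b)}).Reachable a b := by
  have hmem : s(a, b) ∈ G.edgeSet := hadj
  have hle : Nat.card ((G.deleteEdges {s(a, b)}).ConnectedComponent)
      ≤ Nat.card G.ConnectedComponent := by
    by_contra hlt
    exact h ⟨hmem, by omega⟩
  set f := ConnectedComponent.map (Hom.ofLE (deleteEdges_le {s(a, b)}))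
    with hf
  have hsurj : Function.Surjective f := by
    intro C
    induction C using ConnectedComponent.ind with
    | _ x => exact ⟨(G.deleteEdges {s(a, b)}).connectedComponentMk x, rfl⟩
  have hbij : Function.Bijective f := (Nat.bijective_iff_surjective_and_card f).mpr
    ⟨hsurj, le_antisymm hle (Nat.card_le_card_of_surjective f hsurj)⟩
  have heq : f ((G.deleteEdges {s(a, b)}).connectedComponentMk a)
      = f ((G.deleteEdges {s(a, b)}).connectedComponentMk b) :=
    ConnectedComponent.sound hadj.reachable
  exact ConnectedComponent.exact (hbij.injective heq)

private lemma cutedge_not_reach [Finite V] {G : SimpleGraph V} {a b : V}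
    (h : IsCutEdge G s(a, b)) : ¬(G.deleteEdges {s(a, b)}).Reachable a b := by
  intro hre
  have hinj : Function.Injective (ConnectedComponent.map
      (Hom.ofLE (deleteEdges_le (G := G) {s(a, b)}))) := by
    intro C C'
    induction C using ConnectedComponent.ind with
    | _ x =>
    induction C' using ConnectedComponent.ind with
    | _ y =>
    intro heq
    exact ConnectedComponent.sound (reach_del_transfer hre (ConnectedComponent.exact heq))
  exact absurd h.2 (not_lt.mpr (Nat.card_le_card_of_injective _ hinj))

private lemma biconn_refl (G : SimpleGraph V) (u : V) : BiconnPair G u u :=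
  ⟨Reachable.refl _, fun _ _ => Reachable.refl _, fun _ _ _ => Reachable.refl _⟩

private lemma biconn_symm {G : SimpleGraph V} {u v : V} (h : BiconnPair G u v) :
    BiconnPair G v u :=
  ⟨h.1.symm, fun e he => (h.2.1 e he).symm, fun w hv hu => (h.2.2 w hu hv).symm⟩

private lemma biconn_trans [Finite V] {G : SimpleGraph V} {u a v : V}
    (h1 : BiconnPair G u a) (h2 : BiconnPair G a v) (ha : ¬IsCutVertex G a) :
    BiconnPair G u v := by
  refine ⟨h1.1.trans h2.1, fun e he => (h1.2.1 e he).trans (h2.2.1 e he), fun w hu hv => ?_⟩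
  by_cases haw : a = w
  · subst haw
    exact noncut_reach ha hu hv (h1.1.trans h2.1)
  · exact (h1.2.2 w hu haw).trans (h2.2.2 w haw hv)

private lemma block_unique [Finite V] {G : SimpleGraph V} {S T : Set V} {a : V}
    (hS : IsBlock G S) (hT : IsBlock G T) (haS : a ∈ S) (haT : a ∈ T)
    (ha : ¬IsCutVertex G a) : S = T := by
  have key : ∀ w ∈ S ∪ T, BiconnPair G w a := by
    intro w hw
    rcases hw with hw | hw
    · exact hS.2.1 w hw a haS
    · exact hT.2.1 w hw a haT
  have hb : BiconnSet G (S ∪ T) := fun u hu v hv =>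
    biconn_trans (key u hu) (biconn_symm (key v hv)) ha
  have h1 := hS.2.2 (S ∪ T) Set.subset_union_left hb
  have h2 := hT.2.2 (S ∪ T) Set.subset_union_right hb
  exact h1.symm.trans h2

private lemma pendant_noncut [Finite V] {G : SimpleGraph V} {S : Set V}
    (h : IsPendantBlock G S) : ∃ v ∈ S, ¬IsCutVertex G v := by
  rcases h.2 with ⟨v, rfl, hdeg⟩ | ⟨hcard, v₀, ⟨hv₀S, _⟩, huniq⟩
  · exact ⟨v, rfl, deg1_noncut hdeg⟩
  · obtain ⟨x, y, hx, hy, hxy⟩ := (Set.one_lt_ncard_iff S.toFinite).mp hcard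
    by_cases hxv : x = v₀
    · refine ⟨y, hy, fun hcut => ?_⟩
      exact hxy (hxv.trans (huniq y ⟨hy, hcut⟩).symm)
    · refine ⟨x, hx, fun hcut => ?_⟩
      exact hxv (huniq x ⟨hx, hcut⟩)

private lemma ind_to_del {G : SimpleGraph V} (a b : V) :
    ∀ {x y : ({w | w ≠ a} : Set V)}, (G.induce {w | w ≠ a}).Reachable x y →
      (G.deleteEdges {s(a, b)}).Reachable x.val y.val := by
  rintro x y ⟨p⟩
  induction p with
  | nil => exact Reachable.refl _
  | cons hadj q ih =>
    rename_i x' z' _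
    refine Reachable.trans ?_ ih
    have hG : G.Adj x'.val z'.val := hadj
    refine (deleteEdges_adj.mpr ⟨hG, ?_⟩).reachable
    simp only [Set.mem_singleton_iff]
    intro hmem
    rcases Sym2.eq_iff.mp hmem with ⟨h1, _⟩ | ⟨_, h2⟩
    · exact x'.2 h1
    · exact z'.2 h2

private lemma only_nbr [Finite V] {G : SimpleGraph V} {a b : V} (hadj : G.Adj a b)
    (ha : ¬IsCutVertex G a) (hce : IsCutEdge G s(a, b)) :
    ∀ z, G.Adj a z → z = b := by
  intro c hc
  by_contra hcb
  apply cutedge_not_reach hce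
  have hrbc := noncut_reach ha hadj.ne' hc.ne' (hadj.symm.reachable.trans hc.reachable)
  have hdel_bc := ind_to_del a b hrbc
  have hac : (G.deleteEdges {s(a, b)}).Adj a c := by
    refine deleteEdges_adj.mpr ⟨hc, ?_⟩
    simp only [Set.mem_singleton_iff]
    intro hmem
    rcases Sym2.eq_iff.mp hmem with ⟨_, h2⟩ | ⟨h1, _⟩
    · exact hcb h2
    · exact hadj.ne h1
  exact hac.reachable.trans hdel_bc.symm

private lemma walk_pair {G : SimpleGraph V} {a b : V}
    (honlyA : ∀ z, G.Adj a z → z = b) (honlyB : ∀ z, G.Adj b z → z = a) :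
    ∀ {x y : V}, G.Walk x y → x = a ∨ x = b → y = a ∨ y = b := by
  intro x y p
  induction p with
  | nil => exact id
  | cons hadj q ih =>
    intro hx
    apply ih
    rcases hx with rfl | rfl
    · exact Or.inr (honlyA _ hadj)
    · exact Or.inl (honlyB _ hadj)

private lemma isolated_structure [Finite V] {G : SimpleGraph V} {S T : Set V} {a b : V}
    (hadj : G.Adj a b) (ha : ¬IsCutVertex G a) (hb : ¬IsCutVertex G b)
    (hS : IsBlock G S) (hT : IsBlock G T) (haS : a ∈ S) (hbT : b ∈ T) (hne : S ≠ T) :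
    S = {a} ∧ T = {b} ∧ {w | G.Reachable a w} = ({a, b} : Set V) := by
  by_cases hce : IsCutEdge G s(a, b)
  · have hnr := cutedge_not_reach hce
    have honlyA : ∀ z, G.Adj a z → z = b := only_nbr hadj ha hce
    have hceb : IsCutEdge G s(b, a) := by rw [Sym2.eq_swap]; exact hce
    have honlyB : ∀ z, G.Adj b z → z = a := only_nbr hadj.symm hb hceb
    have hbadpair : ¬BiconnPair G a b := fun hp => hnr (hp.2.1 s(a, b) hadj)
    have hreach : {w | G.Reachable a w} = ({a, b} : Set V) := by
      ext w
      simp only [Set.mem_setOf_eq, Set.mem_insert_iff, Set.mem_singleton_iff]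
      constructor
      · rintro ⟨p⟩
        exact walk_pair honlyA honlyB p (Or.inl rfl)
      · rintro (rfl | rfl)
        · exact Reachable.refl _
        · exact hadj.reachable
    refine ⟨?_, ?_, hreach⟩
    · refine Set.eq_singleton_iff_unique_mem.mpr ⟨haS, fun y hy => ?_⟩
      have hp := hS.2.1 a haS y hy
      obtain ⟨p⟩ := hp.1
      rcases walk_pair honlyA honlyB p (Or.inl rfl) with rfl | rfl
      · rfl
      · exact absurd hp hbadpair
    · refine Set.eq_singleton_iff_unique_mem.mpr ⟨hbT, fun y hy => ?_⟩
      have hp := hT.2.1 b hbT y hy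
      obtain ⟨p⟩ := hp.1
      rcases walk_pair honlyA honlyB p (Or.inr rfl) with rfl | rfl
      · exact absurd (biconn_symm hp) hbadpair
      · rfl
  · exfalso
    have hab : BiconnPair G a b := by
      refine ⟨hadj.reachable, fun e he => ?_, fun w hu hv => ?_⟩
      · by_cases h' : e = s(a, b)
        · subst h'
          exact not_cutedge_reach hadj hce
        · refine (deleteEdges_adj.mpr ⟨hadj, ?_⟩).reachable
          simp only [Set.mem_singleton_iff]
          exact fun hq => h' hq.symm
      · exact (show (G.induce {x | x ≠ w}).Adj ⟨a, hu⟩ ⟨b, hv⟩ from hadj).reachable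
    have key : ∀ w ∈ S ∪ {b}, BiconnPair G w a := by
      intro w hw
      rcases hw with hw | hw
      · exact hS.2.1 w hw a haS
      · rw [Set.mem_singleton_iff] at hw
        subst hw
        exact biconn_symm hab
    have hbig : BiconnSet G (S ∪ {b}) := fun u hu v hv =>
      biconn_trans (key u hu) (biconn_symm (key v hv)) ha
    have hU := hS.2.2 (S ∪ {b}) Set.subset_union_left hbig
    have hbS : b ∈ S := by
      rw [← hU]
      exact Set.mem_union_right S rfl
    exact hne (block_unique hS hT hbS hbT hb)


theorem stmt_1 [Fintype V] (G : SimpleGraph V) (A B : Set V)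
    (hdisj : Disjoint A B) (hcov : A ∪ B = Set.univ)
    (hbip : ∀ u v : V, G.Adj u v → (u ∈ A ∧ v ∈ B) ∨ (u ∈ B ∧ v ∈ A))
    (Y1 Y2 : Set V) (hpair : LegalPair G A B Y1 Y2)
    (hnotiso : ¬∃ u v : V, G.Adj u v ∧ Y1 = {u} ∧ Y2 = {v} ∧
      {w | G.Reachable u w} = ({u, v} : Set V)) :
    ∃ a b : V, BindingEdge G A B Y1 Y2 a b := by
  obtain ⟨hY1, hY2, hne, hA, hB⟩ := hpair
  have hside : ∀ v : V, v ∈ A ∨ v ∈ B := fun v => by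
    have h := Set.mem_univ v
    rw [← hcov] at h
    exact h
  have main : ∀ a b : V, a ∈ A → b ∈ B → ¬IsCutVertex G a → ¬IsCutVertex G b →
      ((a ∈ Y1 ∧ b ∈ Y2) ∨ (a ∈ Y2 ∧ b ∈ Y1)) →
      ∃ a' b' : V, BindingEdge G A B Y1 Y2 a' b' := by
    intro a b haA hbB hanc hbnc hmem
    have hnadj : ¬G.Adj a b := by
      intro hadj
      rcases hmem with ⟨haY, hbY⟩ | ⟨haY, hbY⟩
      · obtain ⟨h1, h2, h3⟩ := isolated_structure hadj hanc hbnc hY1.1 hY2.1 haY hbY hne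
        exact hnotiso ⟨a, b, hadj, h1, h2, h3⟩
      · obtain ⟨h1, h2, h3⟩ :=
          isolated_structure hadj hanc hbnc hY2.1 hY1.1 haY hbY (Ne.symm hne)
        refine hnotiso ⟨b, a, hadj.symm, h2, h1, ?_⟩
        have h3' := Set.ext_iff.mp h3
        ext w
        simp only [Set.mem_setOf_eq, Set.mem_insert_iff, Set.mem_singleton_iff]
        constructor
        · intro hw
          have hmem2 := (h3' w).mp (hadj.reachable.trans hw)
          simp only [Set.mem_insert_iff, Set.mem_singleton_iff] at hmem2
          exact hmem2.symm
        · rintro (rfl | rfl)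
          · exact Reachable.refl _
          · exact hadj.symm.reachable
    refine ⟨a, b, ⟨haA, hbB, hnadj⟩, ?_⟩
    rcases hmem with ⟨haY, hbY⟩ | ⟨haY, hbY⟩
    · exact Or.inl ⟨haY, hanc, hbY, hbnc⟩
    · exact Or.inr ⟨haY, hanc, hbY, hbnc⟩
  obtain ⟨v₁, hv₁Y, hv₁nc⟩ := pendant_noncut hY1
  obtain ⟨v₂, hv₂Y, hv₂nc⟩ := pendant_noncut hY2
  rcases hside v₁ with h1 | h1 <;> rcases hside v₂ with h2 | h2
  · rw [not_and_or] at hA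
    rcases hA with hA | hA <;> (rw [TypeOnly] at hA; push_neg at hA)
    · obtain ⟨w, hwY, hwnc, hwA⟩ := hA
      exact main v₂ w h2 ((hside w).resolve_left hwA) hv₂nc hwnc (Or.inr ⟨hv₂Y, hwY⟩)
    · obtain ⟨w, hwY, hwnc, hwA⟩ := hA
      exact main v₁ w h1 ((hside w).resolve_left hwA) hv₁nc hwnc (Or.inl ⟨hv₁Y, hwY⟩)
  · exact main v₁ v₂ h1 h2 hv₁nc hv₂nc (Or.inl ⟨hv₁Y, hv₂Y⟩)
  · exact main v₂ v₁ h2 h1 hv₂nc hv₁nc (Or.inr ⟨hv₂Y, hv₁Y⟩)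
  · rw [not_and_or] at hB
    rcases hB with hB | hB <;> (rw [TypeOnly] at hB; push_neg at hB)
    · obtain ⟨w, hwY, hwnc, hwB⟩ := hB
      exact main w v₂ ((hside w).resolve_right hwB) h2 hwnc hv₂nc (Or.inl ⟨hwY, hv₂Y⟩)
    · obtain ⟨w, hwY, hwnc, hwB⟩ := hB
      exact main w v₁ ((hside w).resolve_right hwB) h1 hwnc hv₁nc (Or.inr ⟨hwY, hv₁Y⟩)

end
end AugBic
end

section
/- Let G=(A,B,E) be a bipartite graph and let n_A, n_B, n_AB be the numbers of type A, type B, and type AB pendant blocks of G, respectively. Then R(Λ(G)) = n_A + n_B + n_AB − 2·M(Λ(G)), and M(Λ(G)) = α + β + γ, where α = min{n_A, n_B}, β = min{|n_A − n_B|, n_AB}, and γ = ⌊(n_AB − β)/2⌋. -/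
open SimpleGraph

namespace AugBic

noncomputable section

variable {V : Type*}

section Aux

variable {G : SimpleGraph V} {A B : Set V} {S : Set V}

lemma walk_avoid (G : SimpleGraph V) {v u : V} (hnb : G.neighborSet v = {u}) :
    ∀ (n : ℕ) {x y : V} (p : G.Walk x y), p.length ≤ n → x ≠ v → y ≠ v →
      ∃ q : G.Walk x y, v ∉ q.support := by
  intro n
  induction n with
  | zero =>
    intro x y p hl hx hy
    cases p with
    | nil => exact ⟨.nil, by simp [hx.symm]⟩
    | cons h p' => simp [SimpleGraph.Walk.length_cons] at hl
  | succ n ih =>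
    intro x y p hl hx hy
    cases p with
    | nil => exact ⟨.nil, by simp [hx.symm]⟩
    | @cons _ z _ h p' =>
      by_cases hz : z = v
      · subst hz
        have hxu : x = u := by
          have : x ∈ G.neighborSet z := h.symm
          rw [hnb] at this; exact this
        cases p' with
        | nil => exact absurd rfl hy
        | @cons _ w _ h2 p'' =>
          have hwu : w = u := by
            have : w ∈ G.neighborSet z := h2
            rw [hnb] at this; exact this
          subst hxu; subst hwu
          have hlen : p''.length ≤ n := by
            simp [SimpleGraph.Walk.length_cons] at hl; omega
          exact ih p'' hlen hx hy
      · obtain ⟨q', hq'⟩ := ih p' (by simp [SimpleGraph.Walk.length_cons] at hl; omega) hz hy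
        exact ⟨.cons h q', by
          simp only [SimpleGraph.Walk.support_cons, List.mem_cons]
          rintro (rfl | hmem)
          · exact hx rfl
          · exact hq' hmem⟩

lemma reachable_induce_of_walk (G : SimpleGraph V) {s : Set V} :
    ∀ {x y : V} (p : G.Walk x y) (hp : ∀ z ∈ p.support, z ∈ s),
      (G.induce s).Reachable ⟨x, hp x p.start_mem_support⟩ ⟨y, hp y p.end_mem_support⟩ := by
  intro x y p
  induction p with
  | nil => intro hp; rfl
  | @cons a b c h p' ih =>
    intro hp
    have hb : ∀ z ∈ p'.support, z ∈ s := fun z hz => hp z (by simp [hz])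
    have h1 : (G.induce s).Adj ⟨a, hp a (by simp)⟩ ⟨b, hb b p'.start_mem_support⟩ := by
      simp [SimpleGraph.comap_adj, h]
    exact (h1.reachable).trans (ih hb)

lemma notcut_of_deg_one [Finite V] {v : V}
    (hdeg : (G.neighborSet v).ncard = 1) : ¬IsCutVertex G v := by
  obtain ⟨u, hu⟩ := Set.ncard_eq_one.mp hdeg
  intro hcut
  have hinj : Function.Injective
      (SimpleGraph.ConnectedComponent.map
        (SimpleGraph.Embedding.induce (G := G) {x | x ≠ v}).toHom) := by
    apply SimpleGraph.ConnectedComponent.ind₂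
    intro a b hab
    simp only [SimpleGraph.ConnectedComponent.map_mk] at hab
    rw [SimpleGraph.ConnectedComponent.eq] at hab ⊢
    obtain ⟨p⟩ := hab
    have ha : (a : V) ≠ v := a.2
    have hb : (b : V) ≠ v := b.2
    obtain ⟨q, hq⟩ := walk_avoid G hu p.length p le_rfl ha hb
    have hall : ∀ z ∈ q.support, z ∈ {x | x ≠ v} := fun z hz => by
      intro hzv; exact hq (hzv ▸ hz)
    exact reachable_induce_of_walk G q hall
  have := Nat.card_le_card_of_injective _ hinj
  unfold IsCutVertex at hcut; omega

lemma pendant_exists_noncut [Finite V] (h : IsPendantBlock G S) :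
    ∃ v ∈ S, ¬IsCutVertex G v := by
  rcases h.2 with ⟨v, rfl, hdeg⟩ | ⟨h1, c, ⟨hcS, _⟩, huniq⟩
  · exact ⟨v, rfl, notcut_of_deg_one hdeg⟩
  · obtain ⟨a, b, ha, hb, hab⟩ := (Set.one_lt_ncard_iff S.toFinite).mp h1
    by_cases hac : a = c
    · refine ⟨b, hb, fun hcut => ?_⟩
      exact hab (hac ▸ (huniq b ⟨hb, hcut⟩).symm ▸ rfl)
    · exact ⟨a, ha, fun hcut => hac (huniq a ⟨ha, hcut⟩)⟩

lemma typeonly_not_both [Finite V] (hd : Disjoint A B) (h : IsPendantBlock G S) :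
    ¬(TypeOnly G A S ∧ TypeOnly G B S) := by
  rintro ⟨hA, hB⟩
  obtain ⟨v, hv, hnc⟩ := pendant_exists_noncut h
  exact (hd.ne_of_mem (hA v hv hnc) (hB v hv hnc)) rfl

lemma typeAB_not_onlyA (hd : Disjoint A B) (h : TypeAB G A B S) : ¬TypeOnly G A S := by
  intro hA
  obtain ⟨v, hv, hnc, hvB⟩ := h.2
  exact (hd.ne_of_mem (hA v hv hnc) hvB) rfl

lemma typeAB_not_onlyB (hd : Disjoint A B) (h : TypeAB G A B S) : ¬TypeOnly G B S := by
  intro hB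
  obtain ⟨v, hv, hnc, hvA⟩ := h.1
  exact (hd.ne_of_mem hvA (hB v hv hnc)) rfl

lemma pendant_type_trichotomy (hcov : A ∪ B = Set.univ) (h : IsPendantBlock G S) :
    TypeAB G A B S ∨ TypeOnly G A S ∨ TypeOnly G B S := by
  by_cases hA : ∃ v ∈ S, ¬IsCutVertex G v ∧ v ∈ A
  · by_cases hB : ∃ v ∈ S, ¬IsCutVertex G v ∧ v ∈ B
    · exact Or.inl ⟨hA, hB⟩
    · push_neg at hB
      refine Or.inr (Or.inl (fun v hv hnc => ?_))
      have := hB v hv hnc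
      have hmem : v ∈ A ∪ B := hcov ▸ Set.mem_univ v
      rcases hmem with hv' | hv'
      · exact hv'
      · exact absurd hv' this
  · push_neg at hA
    refine Or.inr (Or.inr (fun v hv hnc => ?_))
    have := hA v hv hnc
    have hmem : v ∈ A ∪ B := hcov ▸ Set.mem_univ v
    rcases hmem with hv' | hv'
    · exact absurd hv' this
    · exact hv'

end Aux

section Aux2

variable [Finite V] {G : SimpleGraph V} {A B : Set V}

lemma disj_TA_TB (hd : Disjoint A B) :
    Disjoint {S : Set V | IsPendantBlock G S ∧ TypeOnly G A S}
      {S : Set V | IsPendantBlock G S ∧ TypeOnly G B S} := by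
  rw [Set.disjoint_left]
  rintro S ⟨hp, hA⟩ ⟨_, hB⟩
  exact typeonly_not_both hd hp ⟨hA, hB⟩

lemma disj_TA_TAB (hd : Disjoint A B) :
    Disjoint {S : Set V | IsPendantBlock G S ∧ TypeOnly G A S}
      {S : Set V | IsPendantBlock G S ∧ TypeAB G A B S} := by
  rw [Set.disjoint_left]
  rintro S ⟨hp, hA⟩ ⟨_, hAB⟩
  exact typeAB_not_onlyA hd hAB hA

lemma disj_TB_TAB (hd : Disjoint A B) :
    Disjoint {S : Set V | IsPendantBlock G S ∧ TypeOnly G B S}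
      {S : Set V | IsPendantBlock G S ∧ TypeAB G A B S} := by
  rw [Set.disjoint_left]
  rintro S ⟨hp, hB⟩ ⟨_, hAB⟩
  exact typeAB_not_onlyB hd hAB hB

lemma pendant_eq_union (hcov : A ∪ B = Set.univ) :
    pendantBlocks G =
      ({S : Set V | IsPendantBlock G S ∧ TypeOnly G A S} ∪
       {S : Set V | IsPendantBlock G S ∧ TypeOnly G B S}) ∪
      {S : Set V | IsPendantBlock G S ∧ TypeAB G A B S} := by
  ext S
  constructor
  · intro hp
    rcases pendant_type_trichotomy hcov hp with h | h | h
    · exact Or.inr ⟨hp, h⟩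
    · exact Or.inl (Or.inl ⟨hp, h⟩)
    · exact Or.inl (Or.inr ⟨hp, h⟩)
  · rintro ((⟨hp, _⟩ | ⟨hp, _⟩) | ⟨hp, _⟩) <;> exact hp

lemma pendant_ncard (hd : Disjoint A B) (hcov : A ∪ B = Set.univ) :
    (pendantBlocks G).ncard =
      {S : Set V | IsPendantBlock G S ∧ TypeOnly G A S}.ncard +
      {S : Set V | IsPendantBlock G S ∧ TypeOnly G B S}.ncard +
      {S : Set V | IsPendantBlock G S ∧ TypeAB G A B S}.ncard := by
  rw [pendant_eq_union hcov, Set.ncard_union_eq, Set.ncard_union_eq (disj_TA_TB hd)]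
  exact Set.disjoint_union_left.mpr ⟨disj_TA_TAB hd, disj_TB_TAB hd⟩

end Aux2

section Aux3

variable [Finite V] {G : SimpleGraph V} {A B : Set V}

lemma matching_blocks_ne {Λ' : Set (Set V)} {N : Set (Set V × Set V)}
    (hN : IsLegalMatching G A B Λ' N) {q q' : Set V × Set V}
    (hq : q ∈ N) (hq' : q' ∈ N) (hne : q ≠ q') :
    q.1 ≠ q'.1 ∧ q.1 ≠ q'.2 ∧ q.2 ≠ q'.1 ∧ q.2 ≠ q'.2 := by
  have h := hN.2 q hq q' hq' hne
  have h1 : ∀ x, x ∈ ({q.1, q.2} : Set (Set V)) → x ∉ ({q'.1, q'.2} : Set (Set V)) := by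
    intro x hx hx'
    exact (Set.eq_empty_iff_forall_notMem.mp h x) ⟨hx, hx'⟩
  refine ⟨fun e => h1 q.1 (by simp) (by simp [e]), fun e => h1 q.1 (by simp) (by simp [e]),
    fun e => h1 q.2 (by simp) (by simp [e]), fun e => h1 q.2 (by simp) (by simp [e])⟩

lemma matching_fst_ne_snd {Λ' : Set (Set V)} {N : Set (Set V × Set V)}
    (hN : IsLegalMatching G A B Λ' N) {q : Set V × Set V} (hq : q ∈ N) : q.1 ≠ q.2 :=
  (hN.1 q hq).2.2.2.2.1

lemma matching_two_ncard_le {N : Set (Set V × Set V)}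
    (hN : IsLegalMatching G A B (pendantBlocks G) N) :
    2 * N.ncard ≤ (pendantBlocks G).ncard := by
  classical
  set g : ↥N × Bool → Set V := fun p => cond p.2 p.1.1.2 p.1.1.1 with hg
  have hginj : Function.Injective g := by
    rintro ⟨⟨q, hq⟩, i⟩ ⟨⟨q', hq'⟩, i'⟩ heq
    by_cases hqq : q = q'
    · subst hqq
      cases i <;> cases i' <;>
        first
          | rfl
          | (exfalso; exact (matching_fst_ne_snd hN hq) (by simpa [hg] using heq))
          | (exfalso
             have h5 : q.2 = q.1 := by simpa [hg] using heq
             exact (matching_fst_ne_snd hN hq) h5.symm)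
    · exfalso
      have h4 := matching_blocks_ne hN hq hq' (by simp [hqq])
      cases i <;> cases i' <;> simp [hg] at heq
      · exact h4.1 heq
      · exact h4.2.1 heq
      · exact h4.2.2.1 heq
      · exact h4.2.2.2 heq
  have hrange : Set.range g ⊆ pendantBlocks G := by
    rintro _ ⟨⟨⟨q, hq⟩, i⟩, rfl⟩
    cases i
    · exact (hN.1 q hq).1
    · exact (hN.1 q hq).2.1
  have h1 : (Set.range g).ncard ≤ (pendantBlocks G).ncard :=
    Set.ncard_le_ncard hrange (Set.toFinite _)
  have h2 : (Set.range g).ncard = 2 * N.ncard := by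
    rw [← Nat.card_coe_set_eq, Nat.card_range_of_injective hginj, Nat.card_prod,
      Nat.card_coe_set_eq, Nat.card_eq_fintype_card, Fintype.card_bool, mul_comm]
  omega

lemma matching_ncard_le_A {N : Set (Set V × Set V)} (hd : Disjoint A B)
    (hcov : A ∪ B = Set.univ)
    (hN : IsLegalMatching G A B (pendantBlocks G) N) :
    N.ncard ≤ {S : Set V | IsPendantBlock G S ∧ TypeOnly G A S}.ncard +
      {S : Set V | IsPendantBlock G S ∧ TypeAB G A B S}.ncard := by
  classical
  set T : Set (Set V) := {S : Set V | IsPendantBlock G S ∧ TypeOnly G A S} ∪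
      {S : Set V | IsPendantBlock G S ∧ TypeAB G A B S} with hT
  have hmemT : ∀ S : Set V, IsPendantBlock G S → ¬TypeOnly G B S → S ∈ T := by
    intro S hp hnB
    rcases pendant_type_trichotomy hcov hp with h | h | h
    · exact Or.inr ⟨hp, h⟩
    · exact Or.inl ⟨hp, h⟩
    · exact absurd h hnB
  set f : ↥N → Set V := fun q => if TypeOnly G B q.1.1 then q.1.2 else q.1.1 with hf
  have hfT : ∀ q : ↥N, f q ∈ T := by
    rintro ⟨q, hq⟩
    have hlp := (hN.1 q hq).2.2
    by_cases h1 : TypeOnly G B q.1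
    · simp only [hf, h1, if_pos]
      refine hmemT q.2 hlp.2.1 (fun h2 => hlp.2.2.2.2 ⟨h1, h2⟩)
    · simp only [hf, h1, if_neg, not_false_iff]
      exact hmemT q.1 hlp.1 h1
  have hfinj : Function.Injective f := by
    rintro ⟨q, hq⟩ ⟨q', hq'⟩ heq
    by_cases hqq : q = q'
    · exact Subtype.ext hqq
    · exfalso
      have h4 := matching_blocks_ne hN hq hq' hqq
      simp only [hf] at heq
      split_ifs at heq
      · exact h4.2.2.2 heq
      · exact h4.2.2.1 heq
      · exact h4.2.1 heq
      · exact h4.1 heq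
  have h1 : Nat.card ↥N ≤ Nat.card ↥T := by
    have : Function.Injective (fun q : ↥N => (⟨f q, hfT q⟩ : ↥T)) := by
      intro a b hab
      exact hfinj (congrArg Subtype.val hab)
    exact Nat.card_le_card_of_injective _ this
  rw [Nat.card_coe_set_eq, Nat.card_coe_set_eq, hT,
    Set.ncard_union_eq (disj_TA_TAB hd)] at h1
  exact h1

lemma matching_ncard_le_B {N : Set (Set V × Set V)} (hd : Disjoint A B)
    (hcov : A ∪ B = Set.univ)
    (hN : IsLegalMatching G A B (pendantBlocks G) N) :
    N.ncard ≤ {S : Set V | IsPendantBlock G S ∧ TypeOnly G B S}.ncard +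
      {S : Set V | IsPendantBlock G S ∧ TypeAB G A B S}.ncard := by
  classical
  set T : Set (Set V) := {S : Set V | IsPendantBlock G S ∧ TypeOnly G B S} ∪
      {S : Set V | IsPendantBlock G S ∧ TypeAB G A B S} with hT
  have hmemT : ∀ S : Set V, IsPendantBlock G S → ¬TypeOnly G A S → S ∈ T := by
    intro S hp hnA
    rcases pendant_type_trichotomy hcov hp with h | h | h
    · exact Or.inr ⟨hp, h⟩
    · exact absurd h hnA
    · exact Or.inl ⟨hp, h⟩
  set f : ↥N → Set V := fun q => if TypeOnly G A q.1.1 then q.1.2 else q.1.1 with hf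
  have hfT : ∀ q : ↥N, f q ∈ T := by
    rintro ⟨q, hq⟩
    have hlp := (hN.1 q hq).2.2
    by_cases h1 : TypeOnly G A q.1
    · simp only [hf, h1, if_pos]
      refine hmemT q.2 hlp.2.1 (fun h2 => hlp.2.2.2.1 ⟨h1, h2⟩)
    · simp only [hf, h1, if_neg, not_false_iff]
      exact hmemT q.1 hlp.1 h1
  have hfinj : Function.Injective f := by
    rintro ⟨q, hq⟩ ⟨q', hq'⟩ heq
    by_cases hqq : q = q'
    · exact Subtype.ext hqq
    · exfalso
      have h4 := matching_blocks_ne hN hq hq' hqq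
      simp only [hf] at heq
      split_ifs at heq
      · exact h4.2.2.2 heq
      · exact h4.2.2.1 heq
      · exact h4.2.1 heq
      · exact h4.1 heq
  have h1 : Nat.card ↥N ≤ Nat.card ↥T := by
    have : Function.Injective (fun q : ↥N => (⟨f q, hfT q⟩ : ↥T)) := by
      intro a b hab
      exact hfinj (congrArg Subtype.val hab)
    exact Nat.card_le_card_of_injective _ this
  rw [Nat.card_coe_set_eq, Nat.card_coe_set_eq, hT,
    Set.ncard_union_eq (disj_TB_TAB hd)] at h1
  exact h1

end Aux3

section Aux4

variable [Finite V] {G : SimpleGraph V} {A B : Set V}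

/-- The claimed value of the maximum matching. -/
def fml (a b c : ℕ) : ℕ :=
  min a b + min (max a b - min a b) c + ((c - min (max a b - min a b) c) / 2)

lemma matching_empty (Λ' : Set (Set V)) : IsLegalMatching G A B Λ' (∅ : Set (Set V × Set V)) :=
  ⟨fun q hq => absurd hq (Set.notMem_empty q), fun q hq => absurd hq (Set.notMem_empty q)⟩

lemma matching_extend {Λ₁ Λ₂ : Set (Set V)} {N : Set (Set V × Set V)}
    (hN : IsLegalMatching G A B Λ₁ N)
    (hsub : Λ₁ ⊆ Λ₂) {a b : Set V} (ha : a ∈ Λ₂) (hb : b ∈ Λ₂)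
    (hna : a ∉ Λ₁) (hnb : b ∉ Λ₁) (hlp : LegalPair G A B a b) :
    IsLegalMatching G A B Λ₂ (insert (a, b) N) ∧
      (insert (a, b) N).ncard = N.ncard + 1 := by
  have hmemN : (a, b) ∉ N := fun h => hna (hN.1 _ h).1
  refine ⟨⟨?_, ?_⟩, Set.ncard_insert_of_notMem hmemN (Set.toFinite N)⟩
  · intro q hq
    rcases Set.mem_insert_iff.mp hq with rfl | hq
    · exact ⟨ha, hb, hlp⟩
    · exact ⟨hsub (hN.1 q hq).1, hsub (hN.1 q hq).2.1, (hN.1 q hq).2.2⟩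
  · intro q hq q' hq' hne
    rcases Set.mem_insert_iff.mp hq with rfl | hq <;>
      rcases Set.mem_insert_iff.mp hq' with rfl | hq'
    · exact absurd rfl hne
    · have h1 := (hN.1 q' hq').1
      have h2 := (hN.1 q' hq').2.1
      ext x
      simp only [Set.mem_inter_iff, Set.mem_insert_iff, Set.mem_singleton_iff,
        Set.mem_empty_iff_false, iff_false, not_and]
      rintro (rfl | rfl) (h | h)
      · exact hna (by rw [h]; exact h1)
      · exact hna (by rw [h]; exact h2)
      · exact hnb (by rw [h]; exact h1)
      · exact hnb (by rw [h]; exact h2)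
    · have h1 := (hN.1 q hq).1
      have h2 := (hN.1 q hq).2.1
      ext x
      simp only [Set.mem_inter_iff, Set.mem_insert_iff, Set.mem_singleton_iff,
        Set.mem_empty_iff_false, iff_false, not_and]
      rintro (rfl | rfl) (h | h)
      · exact hna (h ▸ h1)
      · exact hnb (h ▸ h1)
      · exact hna (h ▸ h2)
      · exact hnb (h ▸ h2)
    · exact hN.2 q hq q' hq' hne

end Aux4

section Aux5

variable [Finite V] {G : SimpleGraph V} {A B : Set V}

lemma build (hd : Disjoint A B) :
    ∀ (n : ℕ) (SA SB SAB : Set (Set V)),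
      SA ⊆ {S : Set V | IsPendantBlock G S ∧ TypeOnly G A S} →
      SB ⊆ {S : Set V | IsPendantBlock G S ∧ TypeOnly G B S} →
      SAB ⊆ {S : Set V | IsPendantBlock G S ∧ TypeAB G A B S} →
      SA.ncard + SB.ncard + SAB.ncard ≤ n →
      ∃ N : Set (Set V × Set V),
        IsLegalMatching G A B (SA ∪ SB ∪ SAB) N ∧
        N.ncard = fml SA.ncard SB.ncard SAB.ncard := by
  intro n
  induction n with
  | zero =>
    intro SA SB SAB _ _ _ hn
    have hA : SA.ncard = 0 := by omega
    have hB : SB.ncard = 0 := by omega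
    have hAB : SAB.ncard = 0 := by omega
    refine ⟨∅, matching_empty _, ?_⟩
    rw [Set.ncard_empty, hA, hB, hAB]
    unfold fml; omega
  | succ n ih =>
    intro SA SB SAB hSA hSB hSAB hn
    by_cases hA : SA.Nonempty
    · by_cases hB : SB.Nonempty
      · -- pair an A block with a B block
        obtain ⟨a, ha⟩ := hA
        obtain ⟨b, hb⟩ := hB
        have haT := hSA ha
        have hbT := hSB hb
        have hposA : 0 < SA.ncard := (Set.ncard_pos (Set.toFinite _)).mpr ⟨a, ha⟩
        have hposB : 0 < SB.ncard := (Set.ncard_pos (Set.toFinite _)).mpr ⟨b, hb⟩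
        have hca : (SA \ {a}).ncard = SA.ncard - 1 := Set.ncard_diff_singleton_of_mem ha
        have hcb : (SB \ {b}).ncard = SB.ncard - 1 := Set.ncard_diff_singleton_of_mem hb
        obtain ⟨N', hN', hc'⟩ := ih (SA \ {a}) (SB \ {b}) SAB
          (Set.diff_subset.trans hSA) (Set.diff_subset.trans hSB) hSAB (by omega)
        have hlp : LegalPair G A B a b := by
          refine ⟨haT.1, hbT.1, ?_, ?_, ?_⟩
          · exact fun e => Set.disjoint_left.mp (disj_TA_TB hd) haT (e ▸ hbT)
          · rintro ⟨_, h2⟩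
            exact typeonly_not_both hd hbT.1 ⟨h2, hbT.2⟩
          · rintro ⟨h1, _⟩
            exact typeonly_not_both hd haT.1 ⟨haT.2, h1⟩
        have hsub : (SA \ {a}) ∪ (SB \ {b}) ∪ SAB ⊆ SA ∪ SB ∪ SAB :=
          Set.union_subset_union
            (Set.union_subset_union Set.diff_subset Set.diff_subset) (subset_refl _)
        have hna : a ∉ (SA \ {a}) ∪ (SB \ {b}) ∪ SAB := by
          rintro ((h | h) | h)
          · exact h.2 rfl
          · exact Set.disjoint_left.mp (disj_TA_TB hd) haT (hSB h.1)
          · exact Set.disjoint_left.mp (disj_TA_TAB hd) haT (hSAB h)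
        have hnb : b ∉ (SA \ {a}) ∪ (SB \ {b}) ∪ SAB := by
          rintro ((h | h) | h)
          · exact Set.disjoint_left.mp (disj_TA_TB hd) (hSA h.1) hbT
          · exact h.2 rfl
          · exact Set.disjoint_left.mp (disj_TB_TAB hd) hbT (hSAB h)
        obtain ⟨hM, hC⟩ := matching_extend hN' hsub
          (Or.inl (Or.inl ha)) (Or.inl (Or.inr hb)) hna hnb hlp
        refine ⟨insert (a, b) N', hM, ?_⟩
        rw [hC, hc', hca, hcb]
        unfold fml; omega
      · by_cases hAB : SAB.Nonempty
        · -- SB empty: pair an A block with an AB block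
          obtain ⟨a, ha⟩ := hA
          obtain ⟨t, ht⟩ := hAB
          have haT := hSA ha
          have htT := hSAB ht
          have hposA : 0 < SA.ncard := (Set.ncard_pos (Set.toFinite _)).mpr ⟨a, ha⟩
          have hposAB : 0 < SAB.ncard := (Set.ncard_pos (Set.toFinite _)).mpr ⟨t, ht⟩
          have hb0 : SB = ∅ := Set.not_nonempty_iff_eq_empty.mp hB
          have hca : (SA \ {a}).ncard = SA.ncard - 1 := Set.ncard_diff_singleton_of_mem ha
          have hct : (SAB \ {t}).ncard = SAB.ncard - 1 := Set.ncard_diff_singleton_of_mem ht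
          obtain ⟨N', hN', hc'⟩ := ih (SA \ {a}) SB (SAB \ {t})
            (Set.diff_subset.trans hSA) hSB (Set.diff_subset.trans hSAB) (by omega)
          have hlp : LegalPair G A B a t := by
            refine ⟨haT.1, htT.1, ?_, ?_, ?_⟩
            · exact fun e => Set.disjoint_left.mp (disj_TA_TAB hd) haT (e ▸ htT)
            · rintro ⟨_, h2⟩
              exact typeAB_not_onlyA hd htT.2 h2
            · rintro ⟨h1, _⟩
              exact typeonly_not_both hd haT.1 ⟨haT.2, h1⟩
          have hsub : (SA \ {a}) ∪ SB ∪ (SAB \ {t}) ⊆ SA ∪ SB ∪ SAB :=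
            Set.union_subset_union
              (Set.union_subset_union Set.diff_subset (subset_refl _)) Set.diff_subset
          have hna : a ∉ (SA \ {a}) ∪ SB ∪ (SAB \ {t}) := by
            rintro ((h | h) | h)
            · exact h.2 rfl
            · exact Set.disjoint_left.mp (disj_TA_TB hd) haT (hSB h)
            · exact Set.disjoint_left.mp (disj_TA_TAB hd) haT (hSAB h.1)
          have hnt : t ∉ (SA \ {a}) ∪ SB ∪ (SAB \ {t}) := by
            rintro ((h | h) | h)
            · exact Set.disjoint_left.mp (disj_TA_TAB hd) (hSA h.1) htT
            · exact Set.disjoint_left.mp (disj_TB_TAB hd) (hSB h) htT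
            · exact h.2 rfl
          obtain ⟨hM, hC⟩ := matching_extend hN' hsub
            (Or.inl (Or.inl ha)) (Or.inr ht) hna hnt hlp
          refine ⟨insert (a, t) N', hM, ?_⟩
          rw [hC, hc', hca, hct, hb0, Set.ncard_empty]
          have hb0' : SB.ncard = 0 := by rw [hb0]; exact Set.ncard_empty _
          unfold fml; omega
        · -- SB and SAB empty: no more pairs
          have hb0 : SB.ncard = 0 := by
            rw [Set.not_nonempty_iff_eq_empty.mp hB]; exact Set.ncard_empty _
          have hab0 : SAB.ncard = 0 := by
            rw [Set.not_nonempty_iff_eq_empty.mp hAB]; exact Set.ncard_empty _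
          refine ⟨∅, matching_empty _, ?_⟩
          rw [Set.ncard_empty, hb0, hab0]
          unfold fml; omega
    · by_cases hB : SB.Nonempty
      · by_cases hAB : SAB.Nonempty
        · -- SA empty: pair a B block with an AB block
          obtain ⟨b, hb⟩ := hB
          obtain ⟨t, ht⟩ := hAB
          have hbT := hSB hb
          have htT := hSAB ht
          have hposB : 0 < SB.ncard := (Set.ncard_pos (Set.toFinite _)).mpr ⟨b, hb⟩
          have hposAB : 0 < SAB.ncard := (Set.ncard_pos (Set.toFinite _)).mpr ⟨t, ht⟩
          have ha0 : SA = ∅ := Set.not_nonempty_iff_eq_empty.mp hA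
          have hcb : (SB \ {b}).ncard = SB.ncard - 1 := Set.ncard_diff_singleton_of_mem hb
          have hct : (SAB \ {t}).ncard = SAB.ncard - 1 := Set.ncard_diff_singleton_of_mem ht
          obtain ⟨N', hN', hc'⟩ := ih SA (SB \ {b}) (SAB \ {t})
            hSA (Set.diff_subset.trans hSB) (Set.diff_subset.trans hSAB) (by omega)
          have hlp : LegalPair G A B b t := by
            refine ⟨hbT.1, htT.1, ?_, ?_, ?_⟩
            · exact fun e => Set.disjoint_left.mp (disj_TB_TAB hd) hbT (e ▸ htT)
            · rintro ⟨h1, _⟩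
              exact typeonly_not_both hd hbT.1 ⟨h1, hbT.2⟩
            · rintro ⟨_, h2⟩
              exact typeAB_not_onlyB hd htT.2 h2
          have hsub : SA ∪ (SB \ {b}) ∪ (SAB \ {t}) ⊆ SA ∪ SB ∪ SAB :=
            Set.union_subset_union
              (Set.union_subset_union (subset_refl _) Set.diff_subset) Set.diff_subset
          have hnb : b ∉ SA ∪ (SB \ {b}) ∪ (SAB \ {t}) := by
            rintro ((h | h) | h)
            · exact Set.disjoint_left.mp (disj_TA_TB hd) (hSA h) hbT
            · exact h.2 rfl
            · exact Set.disjoint_left.mp (disj_TB_TAB hd) hbT (hSAB h.1)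
          have hnt : t ∉ SA ∪ (SB \ {b}) ∪ (SAB \ {t}) := by
            rintro ((h | h) | h)
            · exact Set.disjoint_left.mp (disj_TA_TAB hd) (hSA h) htT
            · exact Set.disjoint_left.mp (disj_TB_TAB hd) (hSB h.1) htT
            · exact h.2 rfl
          obtain ⟨hM, hC⟩ := matching_extend hN' hsub
            (Or.inl (Or.inr hb)) (Or.inr ht) hnb hnt hlp
          refine ⟨insert (b, t) N', hM, ?_⟩
          have ha0' : SA.ncard = 0 := by rw [ha0]; exact Set.ncard_empty _
          rw [hC, hc', hcb, hct, ha0']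
          unfold fml; omega
        · -- SA and SAB empty
          have ha0 : SA.ncard = 0 := by
            rw [Set.not_nonempty_iff_eq_empty.mp hA]; exact Set.ncard_empty _
          have hab0 : SAB.ncard = 0 := by
            rw [Set.not_nonempty_iff_eq_empty.mp hAB]; exact Set.ncard_empty _
          refine ⟨∅, matching_empty _, ?_⟩
          rw [Set.ncard_empty, ha0, hab0]
          unfold fml; omega
      · by_cases h2 : 1 < SAB.ncard
        · -- SA and SB empty: pair two AB blocks
          obtain ⟨t, t', ht, ht', htt⟩ := (Set.one_lt_ncard_iff (Set.toFinite SAB)).mp h2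
          have htT := hSAB ht
          have htT' := hSAB ht'
          have hct : (SAB \ {t}).ncard = SAB.ncard - 1 := Set.ncard_diff_singleton_of_mem ht
          have ht'm : t' ∈ SAB \ {t} := ⟨ht', fun e => htt (e ▸ rfl)⟩
          have hct' : ((SAB \ {t}) \ {t'}).ncard = (SAB \ {t}).ncard - 1 :=
            Set.ncard_diff_singleton_of_mem ht'm
          obtain ⟨N', hN', hc'⟩ := ih SA SB ((SAB \ {t}) \ {t'})
            hSA hSB ((Set.diff_subset.trans Set.diff_subset).trans hSAB) (by omega)
          have hlp : LegalPair G A B t t' := by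
            refine ⟨htT.1, htT'.1, htt, ?_, ?_⟩
            · rintro ⟨h1, _⟩
              exact typeAB_not_onlyA hd htT.2 h1
            · rintro ⟨h1, _⟩
              exact typeAB_not_onlyB hd htT.2 h1
          have hsub : SA ∪ SB ∪ ((SAB \ {t}) \ {t'}) ⊆ SA ∪ SB ∪ SAB :=
            Set.union_subset_union (subset_refl _) (Set.diff_subset.trans Set.diff_subset)
          have hnt : t ∉ SA ∪ SB ∪ ((SAB \ {t}) \ {t'}) := by
            rintro ((h | h) | h)
            · exact Set.disjoint_left.mp (disj_TA_TAB hd) (hSA h) htT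
            · exact Set.disjoint_left.mp (disj_TB_TAB hd) (hSB h) htT
            · exact h.1.2 rfl
          have hnt' : t' ∉ SA ∪ SB ∪ ((SAB \ {t}) \ {t'}) := by
            rintro ((h | h) | h)
            · exact Set.disjoint_left.mp (disj_TA_TAB hd) (hSA h) htT'
            · exact Set.disjoint_left.mp (disj_TB_TAB hd) (hSB h) htT'
            · exact h.2 rfl
          obtain ⟨hM, hC⟩ := matching_extend hN' hsub
            (Or.inr ht) (Or.inr ht') hnt hnt' hlp
          refine ⟨insert (t, t') N', hM, ?_⟩
          have ha0 : SA.ncard = 0 := by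
            rw [Set.not_nonempty_iff_eq_empty.mp hA]; exact Set.ncard_empty _
          have hb0 : SB.ncard = 0 := by
            rw [Set.not_nonempty_iff_eq_empty.mp hB]; exact Set.ncard_empty _
          rw [hC, hc', hct', hct, ha0, hb0]
          unfold fml; omega
        · -- nothing to pair
          have ha0 : SA.ncard = 0 := by
            rw [Set.not_nonempty_iff_eq_empty.mp hA]; exact Set.ncard_empty _
          have hb0 : SB.ncard = 0 := by
            rw [Set.not_nonempty_iff_eq_empty.mp hB]; exact Set.ncard_empty _
          refine ⟨∅, matching_empty _, ?_⟩
          rw [Set.ncard_empty, ha0, hb0]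
          unfold fml; omega

end Aux5

theorem stmt_3 [Fintype V] (G : SimpleGraph V) (A B : Set V)
    (hdisj : Disjoint A B) (hcov : A ∪ B = Set.univ)
    (hbip : ∀ u v : V, G.Adj u v → (u ∈ A ∧ v ∈ B) ∨ (u ∈ B ∧ v ∈ A)) :
    let nA := {S : Set V | IsPendantBlock G S ∧ TypeOnly G A S}.ncard
    let nB := {S : Set V | IsPendantBlock G S ∧ TypeOnly G B S}.ncard
    let nAB := {S : Set V | IsPendantBlock G S ∧ TypeAB G A B S}.ncard
    let α := min nA nB
    let β := min (max nA nB - min nA nB) nAB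
    let γ := (nAB - β) / 2
    Rnum G A B (pendantBlocks G) = nA + nB + nAB - 2 * maxMatching G A B (pendantBlocks G) ∧
    maxMatching G A B (pendantBlocks G) = α + β + γ := by
  classical
  have hcardΛ := pendant_ncard (G := G) hdisj hcov
  have hM : maxMatching G A B (pendantBlocks G) =
      fml {S : Set V | IsPendantBlock G S ∧ TypeOnly G A S}.ncard
        {S : Set V | IsPendantBlock G S ∧ TypeOnly G B S}.ncard
        {S : Set V | IsPendantBlock G S ∧ TypeAB G A B S}.ncard := by
    have hub : ∀ k ∈ {k | ∃ N, IsLegalMatching G A B (pendantBlocks G) N ∧ N.ncard = k},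
        k ≤ fml {S : Set V | IsPendantBlock G S ∧ TypeOnly G A S}.ncard
          {S : Set V | IsPendantBlock G S ∧ TypeOnly G B S}.ncard
          {S : Set V | IsPendantBlock G S ∧ TypeAB G A B S}.ncard := by
      rintro k ⟨N, hN, rfl⟩
      have h1 := matching_two_ncard_le hN
      have h2 := matching_ncard_le_A hdisj hcov hN
      have h3 := matching_ncard_le_B hdisj hcov hN
      rw [hcardΛ] at h1
      unfold fml
      omega
    have hlb : ∃ N, IsLegalMatching G A B (pendantBlocks G) N ∧
        N.ncard = fml {S : Set V | IsPendantBlock G S ∧ TypeOnly G A S}.ncard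
          {S : Set V | IsPendantBlock G S ∧ TypeOnly G B S}.ncard
          {S : Set V | IsPendantBlock G S ∧ TypeAB G A B S}.ncard := by
      obtain ⟨N, hN, hc⟩ := build hdisj
        ({S : Set V | IsPendantBlock G S ∧ TypeOnly G A S}.ncard +
          {S : Set V | IsPendantBlock G S ∧ TypeOnly G B S}.ncard +
          {S : Set V | IsPendantBlock G S ∧ TypeAB G A B S}.ncard)
        _ _ _ subset_rfl subset_rfl subset_rfl le_rfl
      refine ⟨N, ?_, hc⟩
      rw [pendant_eq_union hcov]
      exact hN
    unfold maxMatching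
    apply le_antisymm
    · exact csSup_le ⟨0, ⟨∅, matching_empty _, Set.ncard_empty _⟩⟩ hub
    · exact le_csSup ⟨_, hub⟩ hlb
  refine ⟨?_, ?_⟩
  · unfold Rnum
    rw [hcardΛ]
  · exact hM

end
end AugBic
end
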